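/- Let ϑ ∈ ℝ and fix y ∈ ℝ. Define k(t,s) = B(ϑ((s−y)² − t²)) for (t,s) ∈ ℝ². Then k is twice continuously differentiable on ℝ² and satisfies ∂²k/∂t²(t,s) − ∂²k/∂s²(t,s) − ϑ·k(t,s) = 0 for all (t,s) ∈ ℝ²; moreover k(0,s) = B(ϑ(s−y)²) and (∂k/∂t)(0,s) = 0 for all s ∈ ℝ, and k(t,s) = 1 whenever s − y = ±t. -/

import Mathlib

/-- `B z = ∑ (−z/4)ⁿ/(n!)²`, so that `B z = J₀(√z)` for `z ≥ 0`, where `J₀` is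
the Bessel function of order zero. -/
noncomputable def besselB (z : ℝ) : ℝ :=
  ∑' n : ℕ, (-z / 4) ^ n / ((Nat.factorial n : ℝ)) ^ 2

open scoped Nat

noncomputable def seriesF (c : ℕ → ℝ) (z : ℝ) : ℝ := ∑' n : ℕ, c n * z ^ n

def shiftS (c : ℕ → ℝ) (n : ℕ) : ℝ := ((n : ℝ) + 1) * c (n + 1)

def GoodBd (c : ℕ → ℝ) : Prop :=
  ∃ K A : ℝ, 0 ≤ K ∧ 0 ≤ A ∧ ∀ n : ℕ, |c n| ≤ K * A ^ n / (n ! : ℝ)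

lemma good_shift {c : ℕ → ℝ} (hc : GoodBd c) : GoodBd (shiftS c) := by
  obtain ⟨K, A, hK, hA, hb⟩ := hc
  refine ⟨K * A, A, by positivity, hA, fun n => ?_⟩
  have h1 : |shiftS c n| = ((n : ℝ) + 1) * |c (n + 1)| := by
    rw [shiftS, abs_mul, abs_of_nonneg (by positivity)]
  rw [h1]
  have h2 := hb (n + 1)
  have hfac : ((n + 1)! : ℝ) = ((n : ℝ) + 1) * (n ! : ℝ) := by
    rw [Nat.factorial_succ]; push_cast; ring
  have hn1 : (0:ℝ) < (n : ℝ) + 1 := by positivity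
  have hfn : (0:ℝ) < (n ! : ℝ) := by positivity
  calc ((n : ℝ) + 1) * |c (n + 1)| ≤ ((n : ℝ) + 1) * (K * A ^ (n+1) / ((n+1)! : ℝ)) := by
        gcongr
    _ = K * A * A ^ n / (n ! : ℝ) := by
        rw [hfac]; field_simp; ring

lemma good_summable {c : ℕ → ℝ} (hc : GoodBd c) (z : ℝ) :
    Summable (fun n : ℕ => c n * z ^ n) := by
  obtain ⟨K, A, hK, hA, hb⟩ := hc
  refine Summable.of_norm_bounded (g := fun n => K * ((A * |z|) ^ n / (n ! : ℝ)))
    ((Real.summable_pow_div_factorial (A * |z|)).mul_left K) (fun n => ?_)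
  rw [norm_mul, norm_pow, Real.norm_eq_abs, Real.norm_eq_abs]
  calc |c n| * |z| ^ n ≤ K * A ^ n / (n ! : ℝ) * |z| ^ n := by
        gcongr; exact hb n
    _ = K * ((A * |z|) ^ n / (n ! : ℝ)) := by rw [mul_pow]; ring

lemma good_hasSum {c : ℕ → ℝ} (hc : GoodBd c) (z : ℝ) :
    HasSum (fun n : ℕ => c n * z ^ n) (seriesF c z) :=
  (good_summable hc z).hasSum

lemma aux_summable (r : ℝ) : Summable (fun n : ℕ => (n : ℝ) * r ^ n / (n ! : ℝ)) := by
  have h := (Real.summable_pow_div_factorial r).mul_left r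
  have h2 : (fun n : ℕ => r * (r ^ n / (n ! : ℝ)))
      = fun n : ℕ => ((n + 1 : ℕ) : ℝ) * r ^ (n + 1) / ((n + 1)! : ℝ) := by
    funext n
    have hfac : ((n + 1)! : ℝ) = ((n : ℝ) + 1) * (n ! : ℝ) := by
      rw [Nat.factorial_succ]; push_cast; ring
    have hfn : ((n !:ℝ)) ≠ 0 := by positivity
    rw [hfac]; push_cast; field_simp; ring
  rw [h2] at h
  exact (summable_nat_add_iff 1).mp h

lemma good_hasDerivAt {c : ℕ → ℝ} (hc : GoodBd c) (z : ℝ) :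
    HasDerivAt (seriesF c) (seriesF (shiftS c) z) z := by
  obtain ⟨K, A, hK, hA, hb⟩ := hc
  set R : ℝ := |z| + 1 with hRdef
  have hR1 : (1:ℝ) ≤ R := by simp [hRdef]
  have hzR : z ∈ Metric.ball (0:ℝ) R := by
    simp only [Metric.mem_ball, dist_zero_right, Real.norm_eq_abs, hRdef]; linarith
  have hu : Summable (fun n : ℕ => K * ((n : ℝ) * (A * R) ^ n / (n ! : ℝ))) :=
    (aux_summable (A * R)).mul_left K
  have hbound : ∀ (n : ℕ) (x : ℝ), x ∈ Metric.ball (0:ℝ) R →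
      ‖c n * ((n : ℝ) * x ^ (n - 1))‖ ≤ K * ((n : ℝ) * (A * R) ^ n / (n ! : ℝ)) := by
    intro n x hx
    have hxR : |x| ≤ R := by
      simp only [Metric.mem_ball, dist_zero_right, Real.norm_eq_abs] at hx; linarith
    match n with
    | 0 => simp
    | Nat.succ m =>
      have hxm : |x| ^ m ≤ R ^ (m + 1) :=
        le_trans (pow_le_pow_left₀ (abs_nonneg x) hxR m)
          (pow_le_pow_right₀ (by linarith) (Nat.le_succ m))
      rw [norm_mul, norm_mul, norm_pow, Real.norm_eq_abs, Real.norm_eq_abs, Real.norm_eq_abs]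
      have hnn : |((m + 1 : ℕ) : ℝ)| = ((m:ℝ) + 1) := by
        rw [abs_of_nonneg (by positivity)]; push_cast; ring
      rw [hnn]

      calc |c (m+1)| * (((m:ℝ) + 1) * |x| ^ m)
          ≤ (K * A ^ (m+1) / ((m+1)! : ℝ)) * (((m:ℝ) + 1) * |x| ^ m) := by
            gcongr; exact hb (m+1)
        _ ≤ (K * A ^ (m+1) / ((m+1)! : ℝ)) * (((m:ℝ) + 1) * R ^ (m+1)) := by
            gcongr
        _ = K * (((m+1:ℕ):ℝ) * (A * R) ^ (m+1) / (((m+1)! : ℝ))) := by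
            rw [mul_pow]; push_cast; ring
  have key := hasDerivAt_tsum_of_isPreconnected hu Metric.isOpen_ball
    (convex_ball (0:ℝ) R).isPreconnected
    (g := fun (n : ℕ) (x : ℝ) => c n * x ^ n)
    (g' := fun (n : ℕ) (x : ℝ) => c n * ((n : ℝ) * x ^ (n - 1)))
    (fun n x _ => (hasDerivAt_pow n x).const_mul (c n))
    hbound hzR (good_summable ⟨K, A, hK, hA, hb⟩ z) hzR
  have h1 : HasSum (fun n : ℕ => shiftS c n * z ^ n) (seriesF (shiftS c) z) :=
    good_hasSum (good_shift ⟨K, A, hK, hA, hb⟩) z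
  have h2 : HasSum (fun n : ℕ => c n * ((n : ℝ) * z ^ (n - 1))) (seriesF (shiftS c) z) := by
    have heq : (fun n : ℕ => shiftS c n * z ^ n)
        = fun n : ℕ => c (n + 1) * (((n + 1 : ℕ) : ℝ) * z ^ (n + 1 - 1)) := by
      funext n; rw [shiftS]; push_cast; ring
    rw [heq] at h1
    have h3 := (hasSum_nat_add_iff
      (f := fun n : ℕ => c n * ((n : ℝ) * z ^ (n - 1))) 1).mp h1
    simpa using h3
  rw [show seriesF (shiftS c) z = ∑' n : ℕ, c n * ((n : ℝ) * z ^ (n - 1)) from h2.tsum_eq.symm]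
  exact key

noncomputable def aCoef (n : ℕ) : ℝ := (-1/4 : ℝ) ^ n / ((n ! : ℝ)) ^ 2

lemma good_a : GoodBd aCoef := by
  refine ⟨1, 1/4, one_pos.le, by norm_num, fun n => ?_⟩
  have hfn : (0:ℝ) < (n ! : ℝ) := by positivity
  have habs : |(-1/4 : ℝ)| = 1/4 := by norm_num
  have h1 : |aCoef n| = (1/4 : ℝ) ^ n / ((n ! : ℝ)) ^ 2 := by
    rw [aCoef, abs_div, abs_pow, habs, abs_pow, Nat.abs_cast]
  rw [h1, one_mul]
  have h1n : (1:ℝ) ≤ (n ! : ℝ) := by exact_mod_cast n.factorial_pos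
  have hle : (n ! : ℝ) ≤ ((n ! : ℝ)) ^ 2 := by nlinarith
  exact div_le_div_of_nonneg_left (by positivity) hfn hle

lemma a_rec (n : ℕ) : 4 * ((n:ℝ)+1)^2 * aCoef (n+1) = - aCoef n := by
  unfold aCoef
  have hfn : ((n ! : ℝ)) ≠ 0 := by positivity
  have hfac : ((n + 1)! : ℝ) = ((n : ℝ) + 1) * (n ! : ℝ) := by
    rw [Nat.factorial_succ]; push_cast; ring
  rw [hfac, pow_succ]
  have hn1 : ((n:ℝ) + 1) ≠ 0 := by positivity
  field_simp
  ring

lemma bessel_ode (z : ℝ) :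
    4 * z * seriesF (shiftS (shiftS aCoef)) z + 4 * seriesF (shiftS aCoef) z
      + seriesF aCoef z = 0 := by
  have g1 : GoodBd (shiftS aCoef) := good_shift good_a
  have g2 : GoodBd (shiftS (shiftS aCoef)) := good_shift g1
  have h2 := (good_hasSum g2 z).mul_left (4 * z)
  set T' : ℕ → ℝ := fun n =>
    if n = 0 then 0 else 4 * z * (shiftS (shiftS aCoef) (n-1) * z ^ (n-1)) with hT'
  have hshift : HasSum T' (4 * z * seriesF (shiftS (shiftS aCoef)) z) := by
    have heq : (fun n : ℕ => T' (n + 1))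
        = fun n : ℕ => 4 * z * (shiftS (shiftS aCoef) n * z ^ n) := by
      funext n; simp [hT']
    have h3 := (hasSum_nat_add_iff (f := T') 1).mp (by rw [heq]; exact h2)
    simpa [hT'] using h3
  have h1 := (good_hasSum g1 z).mul_left 4
  have h0 := good_hasSum good_a z
  have hall := (hshift.add h1).add h0
  have hfun : (fun n : ℕ => (T' n + 4 * (shiftS aCoef n * z ^ n)) + aCoef n * z ^ n)
      = fun _ => (0:ℝ) := by
    funext n
    match n with
    | 0 =>
      simp [hT', shiftS, aCoef]
      norm_num
    | Nat.succ m =>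
      have hT : T' (m+1) = 4 * z * (shiftS (shiftS aCoef) m * z ^ m) := by simp [hT']
      rw [hT]; simp only [shiftS]
      have hrec := a_rec (m+1)
      push_cast at hrec ⊢
      simp only [Nat.succ_eq_add_one]
      linear_combination (z ^ (m+1)) * hrec
  rw [hfun] at hall
  exact (hall.unique hasSum_zero)

lemma besselB_eq : besselB = seriesF aCoef := by
  funext z
  unfold besselB seriesF aCoef
  exact tsum_congr fun n => by rw [show -z/4 = (-1/4 : ℝ) * z by ring, mul_pow]; ring

lemma besselB_zero : besselB 0 = 1 := by
  unfold besselB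
  rw [tsum_eq_single 0 (fun b hb => by rw [neg_zero, zero_div, zero_pow hb, zero_div])]
  norm_num

lemma contDiff_seriesF {c : ℕ → ℝ} (hc : GoodBd c) : ContDiff ℝ 2 (seriesF c) := by
  have d0 := good_hasDerivAt hc
  have d1 := good_hasDerivAt (good_shift hc)
  have d2 := good_hasDerivAt (good_shift (good_shift hc))
  have e0 : deriv (seriesF c) = seriesF (shiftS c) := funext fun z => (d0 z).deriv
  have e1 : deriv (seriesF (shiftS c)) = seriesF (shiftS (shiftS c)) :=
    funext fun z => (d1 z).deriv
  rw [show (2 : WithTop ℕ∞) = 1 + 1 from rfl, contDiff_succ_iff_deriv]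
  refine ⟨fun z => (d0 z).differentiableAt, by simp, ?_⟩
  rw [e0, contDiff_one_iff_deriv, e1]
  exact ⟨fun z => (d1 z).differentiableAt,
    (Differentiable.continuous fun z => (d2 z).differentiableAt)⟩

/-- The kernel `k(t,s) = B(ϑ((s−y)² − t²))` is a `C²` solution of
`∂²k/∂t² − ∂²k/∂s² − ϑ·k = 0` with `k(0,s) = B(ϑ(s−y)²)`, `∂ₜk(0,s) = 0`, and
`k(t,s) = 1` on the characteristics `s − y = ±t`. -/
theorem kernel_properties_klein_gordon
    (ϑ y : ℝ) (k : ℝ → ℝ → ℝ)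
    (hk : ∀ t s : ℝ, k t s = besselB (ϑ * ((s - y) ^ 2 - t ^ 2))) :
    ContDiff ℝ 2 (fun p : ℝ × ℝ => k p.1 p.2) ∧
    (∀ t s : ℝ,
      deriv (fun t' => deriv (fun t'' => k t'' s) t') t
        - deriv (fun s' => deriv (fun s'' => k t s'') s') s
        - ϑ * k t s = 0) ∧
    (∀ s : ℝ, k 0 s = besselB (ϑ * (s - y) ^ 2)) ∧
    (∀ s : ℝ, deriv (fun t => k t s) 0 = 0) ∧
    (∀ t s : ℝ, s - y = t ∨ s - y = -t → k t s = 1) := by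
  have g0 := good_a
  have g1 := good_shift g0
  have g2 := good_shift g1
  -- inner derivatives
  have hut : ∀ s t : ℝ, HasDerivAt (fun t : ℝ => ϑ * ((s - y) ^ 2 - t ^ 2))
      (ϑ * -(2 * t)) t := by
    intro s t
    have h := ((hasDerivAt_pow 2 t).const_sub ((s - y) ^ 2)).const_mul ϑ
    refine h.congr_deriv ?_
    push_cast; ring
  have hus : ∀ t s : ℝ, HasDerivAt (fun s : ℝ => ϑ * ((s - y) ^ 2 - t ^ 2))
      (ϑ * (2 * (s - y))) s := by
    intro t s
    have h := ((((hasDerivAt_id s).sub_const y).pow 2).sub_const (t ^ 2)).const_mul ϑ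
    simp only [id_eq] at h
    refine h.congr_deriv ?_
    push_cast; ring
  -- first t-derivative
  have hdt : ∀ s t : ℝ, HasDerivAt (fun t => seriesF aCoef (ϑ * ((s - y) ^ 2 - t ^ 2)))
      (seriesF (shiftS aCoef) (ϑ * ((s - y) ^ 2 - t ^ 2)) * (ϑ * -(2 * t))) t :=
    fun s t => (good_hasDerivAt g0 _).comp t (hut s t)
  have hds : ∀ t s : ℝ, HasDerivAt (fun s => seriesF aCoef (ϑ * ((s - y) ^ 2 - t ^ 2)))
      (seriesF (shiftS aCoef) (ϑ * ((s - y) ^ 2 - t ^ 2)) * (ϑ * (2 * (s - y)))) s :=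
    fun t s => (good_hasDerivAt g0 _).comp s (hus t s)
  have hdt' : ∀ s : ℝ, (fun t' => deriv (fun t'' =>
        seriesF aCoef (ϑ * ((s - y) ^ 2 - t'' ^ 2))) t')
      = fun t' => seriesF (shiftS aCoef) (ϑ * ((s - y) ^ 2 - t' ^ 2)) * (ϑ * -(2 * t')) :=
    fun s => funext fun t' => (hdt s t').deriv
  have hds' : ∀ t : ℝ, (fun s' => deriv (fun s'' =>
        seriesF aCoef (ϑ * ((s'' - y) ^ 2 - t ^ 2))) s')
      = fun s' => seriesF (shiftS aCoef) (ϑ * ((s' - y) ^ 2 - t ^ 2)) * (ϑ * (2 * (s' - y))) :=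
    fun t => funext fun s' => (hds t s').deriv
  -- derivatives of the linear factors
  have hlin1 : ∀ t : ℝ, HasDerivAt (fun t' : ℝ => ϑ * -(2 * t')) (ϑ * -2) t := by
    intro t
    have h := (((hasDerivAt_id t).const_mul 2).neg).const_mul ϑ
    simp only [id_eq] at h
    refine h.congr_deriv ?_
    ring
  have hlin2 : ∀ s : ℝ, HasDerivAt (fun s' : ℝ => ϑ * (2 * (s' - y))) (ϑ * 2) s := by
    intro s
    have h := (((hasDerivAt_id s).sub_const y).const_mul 2).const_mul ϑ
    simp only [id_eq] at h
    refine h.congr_deriv ?_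
    ring
  -- second derivatives
  have hddt : ∀ s t : ℝ, HasDerivAt
      (fun t' => seriesF (shiftS aCoef) (ϑ * ((s - y) ^ 2 - t' ^ 2)) * (ϑ * -(2 * t')))
      (seriesF (shiftS (shiftS aCoef)) (ϑ * ((s - y) ^ 2 - t ^ 2)) * (ϑ * -(2 * t))
          * (ϑ * -(2 * t))
        + seriesF (shiftS aCoef) (ϑ * ((s - y) ^ 2 - t ^ 2)) * (ϑ * -2)) t :=
    fun s t => ((good_hasDerivAt g1 _).comp t (hut s t)).mul (hlin1 t)
  have hdds : ∀ t s : ℝ, HasDerivAt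
      (fun s' => seriesF (shiftS aCoef) (ϑ * ((s' - y) ^ 2 - t ^ 2)) * (ϑ * (2 * (s' - y))))
      (seriesF (shiftS (shiftS aCoef)) (ϑ * ((s - y) ^ 2 - t ^ 2)) * (ϑ * (2 * (s - y)))
          * (ϑ * (2 * (s - y)))
        + seriesF (shiftS aCoef) (ϑ * ((s - y) ^ 2 - t ^ 2)) * (ϑ * 2)) s :=
    fun t s => ((good_hasDerivAt g1 _).comp s (hus t s)).mul (hlin2 s)
  refine ⟨?_, ?_, ?_, ?_, ?_⟩
  · -- C²
    have heq : (fun p : ℝ × ℝ => k p.1 p.2)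
        = (seriesF aCoef) ∘ (fun p : ℝ × ℝ => ϑ * ((p.2 - y) ^ 2 - p.1 ^ 2)) := by
      funext p
      rw [hk, besselB_eq]
      rfl
    rw [heq]
    refine (contDiff_seriesF g0).comp ?_
    exact contDiff_const.mul (((contDiff_snd.sub contDiff_const).pow 2).sub
      (contDiff_fst.pow 2))
  · -- PDE
    intro t s
    simp only [hk, besselB_eq]
    rw [hdt' s, hds' t, (hddt s t).deriv, (hdds t s).deriv]
    have hode := bessel_ode (ϑ * ((s - y) ^ 2 - t ^ 2))
    linear_combination (-ϑ) * hode
  · -- initial value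
    intro s
    rw [hk]
    norm_num
  · -- initial t-derivative
    intro s
    simp only [hk, besselB_eq]
    rw [(hdt s 0).deriv]
    norm_num
  · -- characteristics
    intro t s h
    rw [hk]
    rcases h with h | h <;> rw [h]
    · simp [besselB_zero]
    · simp [neg_sq, besselB_zero]
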